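/- Let W₀ and W₁ be complex vector spaces with dim W₀ = dim W₁ = k ≤ 4, and let x : W₀ → W₁ and a₁, a₂ : W₁ → W₀ be linear maps such that a₁∘x∘a₂ = a₂∘x∘a₁, range x ⊆ range(x∘a₁) + range(x∘a₂), and both a₁∘x and a₂∘x are nilpotent endomorphisms of W₀. Then dim(range(a₁∘x) + range(a₂∘x)) ≤ dim(range x). -/

import Mathlib

open LinearMap Module Submodule

/-- If `a ∘ x` is nilpotent then so is `x ∘ a`. -/
private lemma nilp_swap {W₀ W₁ : Type*} [AddCommGroup W₀] [Module ℂ W₀]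
    [AddCommGroup W₁] [Module ℂ W₁] (x : W₀ →ₗ[ℂ] W₁) (a : W₁ →ₗ[ℂ] W₀)
    (h : IsNilpotent (a ∘ₗ x)) : IsNilpotent (x ∘ₗ a) := by
  obtain ⟨m, hm⟩ := h
  refine ⟨m + 1, ?_⟩
  have key : ∀ j : ℕ, (x ∘ₗ a) ^ (j + 1) = x ∘ₗ (((a ∘ₗ x) ^ j) ∘ₗ a) := by
    intro j
    induction j with
    | zero => simp [Module.End.one_eq_id]
    | succ j ih =>
      rw [pow_succ, ih, pow_succ]
      ext w
      simp [Module.End.mul_apply]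
  rw [key m, hm]
  simp

/-- Eigenvalues of nilpotent endomorphisms vanish. -/
private lemma nilp_eig {W : Type*} [AddCommGroup W] [Module ℂ W] (f : W →ₗ[ℂ] W)
    (hf : IsNilpotent f) {v : W} (hv : v ≠ 0) {c : ℂ} (h : f v = c • v) : c = 0 := by
  obtain ⟨m, hm⟩ := hf
  have key : ∀ j : ℕ, (f ^ j) v = c ^ j • v := by
    intro j
    induction j with
    | zero => simp [Module.End.one_eq_id]
    | succ j ih =>
      rw [pow_succ, Module.End.mul_apply, h, map_smul, ih, pow_succ, smul_smul, mul_comm]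
  have h0 : c ^ m • v = 0 := by rw [← key m, hm]; rfl
  rcases smul_eq_zero.mp h0 with hc | hc
  · by_cases hm0 : m = 0
    · subst hm0; simp at hc
    · exact pow_eq_zero_iff hm0 |>.mp hc
  · exact absurd hc hv

/-- Nakayama-type: commuting nilpotent endomorphisms cannot jointly surject. -/
private lemma nakayama_lt {W : Type*} [AddCommGroup W] [Module ℂ W] [FiniteDimensional ℂ W]
    (n₁ n₂ : W →ₗ[ℂ] W) (hc : n₁ ∘ₗ n₂ = n₂ ∘ₗ n₁)
    (h1 : IsNilpotent n₁) (h2 : IsNilpotent n₂) (hW : 0 < Module.finrank ℂ W) :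
    Module.finrank ℂ ↥(LinearMap.range n₁ ⊔ LinearMap.range n₂) < Module.finrank ℂ W := by
  by_contra hcon
  push_neg at hcon
  have htop : LinearMap.range n₁ ⊔ LinearMap.range n₂ = ⊤ :=
    Submodule.eq_top_of_finrank_eq (le_antisymm (Submodule.finrank_le _) hcon)
  have key : ∀ i : ℕ, LinearMap.range n₁ ⊔ LinearMap.range (n₂ ^ (i + 1)) = ⊤ := by
    intro i
    induction i with
    | zero => simpa using htop
    | succ i ih =>
      have hmap : Submodule.map (n₂ ^ (i + 1)) ⊤
          ≤ LinearMap.range (n₂ ^ (i + 2)) ⊔ LinearMap.range n₁ := by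
        rw [← htop, Submodule.map_sup]
        apply sup_le
        · have hcm : (n₂ ^ (i + 1)) ∘ₗ n₁ = n₁ ∘ₗ (n₂ ^ (i + 1)) := by
            have hc' : Commute n₂ n₁ := by
              unfold Commute SemiconjBy
              simpa [Module.End.mul_eq_comp] using hc.symm
            simpa [Module.End.mul_eq_comp] using (hc'.pow_left (i + 1)).eq
          rw [← LinearMap.range_comp, hcm, LinearMap.range_comp]
          exact le_sup_of_le_right (LinearMap.map_le_range)
        · rw [← LinearMap.range_comp]
          have h2' : (n₂ ^ (i + 1)) ∘ₗ n₂ = n₂ ^ (i + 2) := by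
            rw [← Module.End.mul_eq_comp, ← pow_succ]
          rw [h2']
          exact le_sup_left
      rw [Submodule.map_top] at hmap
      have hle : (⊤ : Submodule ℂ W) ≤ LinearMap.range n₁ ⊔ LinearMap.range (n₂ ^ (i + 2)) := by
        rw [← ih]
        apply sup_le le_sup_left
        exact le_trans hmap (by rw [sup_comm])
      exact le_antisymm le_top hle
  obtain ⟨m, hm⟩ := h2
  have hr1 : LinearMap.range n₁ = ⊤ := by
    have hkm := key m
    have hz : n₂ ^ (m + 1) = 0 := by rw [pow_succ, hm]; simp
    rw [hz] at hkm
    simpa using hkm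
  have hall : ∀ j : ℕ, LinearMap.range (n₁ ^ j) = ⊤ := by
    intro j
    induction j with
    | zero => simp [Module.End.one_eq_id]
    | succ j ih =>
      rw [pow_succ', Module.End.mul_eq_comp, LinearMap.range_comp, ih, Submodule.map_top, hr1]
  obtain ⟨m₁, hm₁⟩ := h1
  have htb : (⊤ : Submodule ℂ W) = ⊥ := by
    rw [← hall m₁, hm₁, LinearMap.range_zero]
  have hzero : Module.finrank ℂ W = 0 := by
    rw [← finrank_top ℂ W, htb, finrank_bot]
  omega

/-- Let `W₀, W₁` be complex vector spaces with `dim W₀ = dim W₁ = k ≤ 4`, and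
`x : W₀ → W₁`, `a₁, a₂ : W₁ → W₀` linear maps with `a₁∘x∘a₂ = a₂∘x∘a₁`,
`range x ⊆ range(x∘a₁) + range(x∘a₂)`, and `a₁∘x`, `a₂∘x` nilpotent. Then
`dim (range(a₁∘x) + range(a₂∘x)) ≤ dim (range x)`. -/
theorem stmt11 {W₀ W₁ : Type*} (k : ℕ) (hk : k ≤ 4)
    [AddCommGroup W₀] [Module ℂ W₀] [FiniteDimensional ℂ W₀]
    [AddCommGroup W₁] [Module ℂ W₁] [FiniteDimensional ℂ W₁]
    (hdim₀ : Module.finrank ℂ W₀ = k) (hdim₁ : Module.finrank ℂ W₁ = k)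
    (x : W₀ →ₗ[ℂ] W₁) (a₁ a₂ : W₁ →ₗ[ℂ] W₀)
    (hcomm : a₁ ∘ₗ x ∘ₗ a₂ = a₂ ∘ₗ x ∘ₗ a₁)
    (hrange : LinearMap.range x ≤ LinearMap.range (x ∘ₗ a₁) ⊔ LinearMap.range (x ∘ₗ a₂))
    (hn₁ : IsNilpotent (a₁ ∘ₗ x))
    (hn₂ : IsNilpotent (a₂ ∘ₗ x)) :
    Module.finrank ℂ ↥(LinearMap.range (a₁ ∘ₗ x) ⊔ LinearMap.range (a₂ ∘ₗ x))
      ≤ Module.finrank ℂ ↥(LinearMap.range x) := by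
  classical
  -- pointwise form of hcomm
  have hcpt : ∀ n : W₁, a₁ (x (a₂ n)) = a₂ (x (a₁ n)) := by
    intro n
    simpa using LinearMap.congr_fun hcomm n
  have hmem₂ : ∀ n : W₁, (x ∘ₗ a₂) n ∈ LinearMap.range x := fun n => ⟨a₂ n, rfl⟩
  have hmem₁' : ∀ n : W₁, (-(x ∘ₗ a₁)) n ∈ LinearMap.range x := fun n => by
    have h : (x ∘ₗ a₁) n ∈ LinearMap.range x := ⟨a₁ n, rfl⟩
    simpa using (LinearMap.range x).neg_mem h
  -- γ : V × V → W₀ where V = range x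
  let γ : (↥(LinearMap.range x) × ↥(LinearMap.range x)) →ₗ[ℂ] W₀ :=
    (a₁ ∘ₗ (LinearMap.range x).subtype).coprod (a₂ ∘ₗ (LinearMap.range x).subtype)
  have hγrange : LinearMap.range γ
      = LinearMap.range (a₁ ∘ₗ x) ⊔ LinearMap.range (a₂ ∘ₗ x) := by
    show LinearMap.range (LinearMap.coprod _ _) = _
    rw [LinearMap.range_coprod, LinearMap.range_comp, LinearMap.range_comp,
      Submodule.range_subtype, LinearMap.range_comp, LinearMap.range_comp]
  -- δ : W₁ → V × V, n ↦ (x a₂ n, -(x a₁ n))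
  let δ : W₁ →ₗ[ℂ] (↥(LinearMap.range x) × ↥(LinearMap.range x)) :=
    ((x ∘ₗ a₂).codRestrict (LinearMap.range x) hmem₂).prod
      ((-(x ∘ₗ a₁)).codRestrict (LinearMap.range x) hmem₁')
  have hδker : LinearMap.range δ ≤ LinearMap.ker γ := by
    rintro _ ⟨n, rfl⟩
    rw [LinearMap.mem_ker]
    have hval : γ (δ n) = a₁ (x (a₂ n)) + a₂ (-(x (a₁ n))) := by
      simp [γ, δ]
    rw [hval, map_neg, hcpt n]
    abel
  have hkerδ : LinearMap.ker δ = LinearMap.ker (x ∘ₗ a₂) ⊓ LinearMap.ker (x ∘ₗ a₁) := by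
    ext n
    simp [δ, LinearMap.mem_ker, Submodule.mem_inf, Prod.ext_iff, Subtype.ext_iff,
      neg_eq_zero]
  -- rank-nullity for γ
  have hrnγ : Module.finrank ℂ ↥(LinearMap.range (a₁ ∘ₗ x) ⊔ LinearMap.range (a₂ ∘ₗ x))
      + Module.finrank ℂ ↥(LinearMap.ker γ)
      = Module.finrank ℂ ↥(LinearMap.range x) + Module.finrank ℂ ↥(LinearMap.range x) := by
    have h := LinearMap.finrank_range_add_finrank_ker γ
    rw [hγrange, Module.finrank_prod] at h
    exact h
  -- rank-nullity for δ
  have hrnδ : Module.finrank ℂ ↥(LinearMap.range δ)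
      + Module.finrank ℂ ↥(LinearMap.ker (x ∘ₗ a₂) ⊓ LinearMap.ker (x ∘ₗ a₁)) = k := by
    have h := LinearMap.finrank_range_add_finrank_ker δ
    rw [hkerδ, hdim₁] at h
    exact h
  have hmono : Module.finrank ℂ ↥(LinearMap.range δ)
      ≤ Module.finrank ℂ ↥(LinearMap.ker γ) := Submodule.finrank_mono hδker
  -- rank-nullity for x, x∘a₁, x∘a₂
  have hrnx : Module.finrank ℂ ↥(LinearMap.range x)
      + Module.finrank ℂ ↥(LinearMap.ker x) = k := by
    have h := LinearMap.finrank_range_add_finrank_ker x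
    rw [hdim₀] at h
    exact h
  have hrn1 : Module.finrank ℂ ↥(LinearMap.range (x ∘ₗ a₁))
      + Module.finrank ℂ ↥(LinearMap.ker (x ∘ₗ a₁)) = k := by
    have h := LinearMap.finrank_range_add_finrank_ker (x ∘ₗ a₁)
    rw [hdim₁] at h
    exact h
  have hrn2 : Module.finrank ℂ ↥(LinearMap.range (x ∘ₗ a₂))
      + Module.finrank ℂ ↥(LinearMap.ker (x ∘ₗ a₂)) = k := by
    have h := LinearMap.finrank_range_add_finrank_ker (x ∘ₗ a₂)
    rw [hdim₁] at h
    exact h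
  have hd1 : Module.finrank ℂ ↥(LinearMap.ker (x ∘ₗ a₂) ⊓ LinearMap.ker (x ∘ₗ a₁))
      ≤ Module.finrank ℂ ↥(LinearMap.ker (x ∘ₗ a₁)) := Submodule.finrank_mono inf_le_right
  have hd2 : Module.finrank ℂ ↥(LinearMap.ker (x ∘ₗ a₂) ⊓ LinearMap.ker (x ∘ₗ a₁))
      ≤ Module.finrank ℂ ↥(LinearMap.ker (x ∘ₗ a₂)) := Submodule.finrank_mono inf_le_left
  have hsupN := Submodule.finrank_sup_add_finrank_inf_eq
    (LinearMap.range (x ∘ₗ a₁)) (LinearMap.range (x ∘ₗ a₂))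
  have hrsup : Module.finrank ℂ ↥(LinearMap.range x) ≤ Module.finrank ℂ
      ↥(LinearMap.range (x ∘ₗ a₁) ⊔ LinearMap.range (x ∘ₗ a₂)) :=
    Submodule.finrank_mono hrange
  have hrk : Module.finrank ℂ ↥(LinearMap.range x) ≤ k :=
    hdim₁ ▸ Submodule.finrank_le (LinearMap.range x)
  -- Case 1 : r + d ≤ k
  by_cases hcase : Module.finrank ℂ ↥(LinearMap.range x)
      + Module.finrank ℂ ↥(LinearMap.ker (x ∘ₗ a₂) ⊓ LinearMap.ker (x ∘ₗ a₁)) ≤ k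
  · omega
  -- now k < r + d ; we get 2 ≤ r automatically
  have hr2 : 2 ≤ Module.finrank ℂ ↥(LinearMap.range x) := by omega
  by_cases hcase2 : k ≤ Module.finrank ℂ ↥(LinearMap.range x) + 1
  · -- Nakayama case
    have hcomm' : (a₁ ∘ₗ x) ∘ₗ (a₂ ∘ₗ x) = (a₂ ∘ₗ x) ∘ₗ (a₁ ∘ₗ x) := by
      ext u
      simpa using hcpt (x u)
    have hq := nakayama_lt (a₁ ∘ₗ x) (a₂ ∘ₗ x) hcomm' hn₁ hn₂
      (by omega : 0 < Module.finrank ℂ W₀)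
    rw [hdim₀] at hq
    omega
  · -- the delicate case : r = 2, k = 4, dim G = 1
    let δ' : W₁ →ₗ[ℂ] (W₁ × W₁) := (x ∘ₗ a₂).prod (x ∘ₗ a₁)
    have hkerδ' : LinearMap.ker δ' = LinearMap.ker (x ∘ₗ a₂) ⊓ LinearMap.ker (x ∘ₗ a₁) :=
      LinearMap.ker_prod _ _
    have hrnδ' : Module.finrank ℂ ↥(LinearMap.range δ')
        + Module.finrank ℂ ↥(LinearMap.ker (x ∘ₗ a₂) ⊓ LinearMap.ker (x ∘ₗ a₁)) = k := by
      have h := LinearMap.finrank_range_add_finrank_ker δ'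
      rw [hkerδ', hdim₁] at h
      exact h
    have hG1 : Module.finrank ℂ ↥(LinearMap.range δ') = 1 := by omega
    obtain ⟨v, hv0, hvgen⟩ := finrank_eq_one_iff'.mp hG1
    have hall : ∀ n : W₁, ∃ c : ℂ,
        (x ∘ₗ a₂) n = c • (v : W₁ × W₁).1 ∧ (x ∘ₗ a₁) n = c • (v : W₁ × W₁).2 := by
      intro n
      obtain ⟨c, hc⟩ := hvgen ⟨δ' n, LinearMap.mem_range_self δ' n⟩
      have hc' : c • (v : W₁ × W₁) = δ' n := by
        simpa using congrArg Subtype.val hc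
      constructor
      constructor
      · have h1 := congrArg Prod.fst hc'
        simpa [δ'] using h1.symm
      · have h2 := congrArg Prod.snd hc'
        simpa [δ'] using h2.symm
    set v₁ : W₁ := (v : W₁ × W₁).1 with hv₁def
    set v₂ : W₁ := (v : W₁ × W₁).2 with hv₂def
    -- auxiliary: finrank of span of a singleton is ≤ 1
    have hspan1 : ∀ w : W₁, Module.finrank ℂ ↥(Submodule.span ℂ ({w} : Set W₁)) ≤ 1 := by
      intro w
      by_cases hw : w = 0
      · subst hw
        rw [Submodule.span_zero_singleton]
        simp
      · rw [finrank_span_singleton hw]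
    have hv1 : v₁ ≠ 0 := by
      intro h0
      have hsub : LinearMap.range x ≤ Submodule.span ℂ ({v₂} : Set W₁) := by
        intro w hw
        obtain ⟨w1, hw1, w2, hw2, rfl⟩ := Submodule.mem_sup.mp (hrange hw)
        obtain ⟨n1, rfl⟩ := hw1
        obtain ⟨n2, rfl⟩ := hw2
        obtain ⟨c1, hc1a, hc1b⟩ := hall n1
        obtain ⟨c2, hc2a, hc2b⟩ := hall n2
        rw [hc1b, hc2a, h0, smul_zero, add_zero]
        exact Submodule.smul_mem _ _ (Submodule.mem_span_singleton_self v₂)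
      have hfm := Submodule.finrank_mono hsub
      have hsp := hspan1 v₂
      omega
    have hv2 : v₂ ≠ 0 := by
      intro h0
      have hsub : LinearMap.range x ≤ Submodule.span ℂ ({v₁} : Set W₁) := by
        intro w hw
        obtain ⟨w1, hw1, w2, hw2, rfl⟩ := Submodule.mem_sup.mp (hrange hw)
        obtain ⟨n1, rfl⟩ := hw1
        obtain ⟨n2, rfl⟩ := hw2
        obtain ⟨c1, hc1a, hc1b⟩ := hall n1
        obtain ⟨c2, hc2a, hc2b⟩ := hall n2
        rw [hc1b, hc2a, h0, smul_zero, zero_add]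
        exact Submodule.smul_mem _ _ (Submodule.mem_span_singleton_self v₁)
      have hfm := Submodule.finrank_mono hsub
      have hsp := hspan1 v₁
      omega
    have hnil1 : IsNilpotent (x ∘ₗ a₁) := nilp_swap x a₁ hn₁
    have hnil2 : IsNilpotent (x ∘ₗ a₂) := nilp_swap x a₂ hn₂
    obtain ⟨c₁, hc₁a, hc₁b⟩ := hall v₁
    have hc₁0 : c₁ = 0 := nilp_eig (x ∘ₗ a₂) hnil2 hv1 hc₁a
    obtain ⟨c₂, hc₂a, hc₂b⟩ := hall v₂
    have hc₂0 : c₂ = 0 := nilp_eig (x ∘ₗ a₁) hnil1 hv2 hc₂b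
    rw [hc₁0, zero_smul] at hc₁a hc₁b
    rw [hc₂0, zero_smul] at hc₂a hc₂b
    -- range x is killed by x∘a₁ and x∘a₂
    have hkill : LinearMap.range x
        ≤ LinearMap.ker (x ∘ₗ a₁) ⊓ LinearMap.ker (x ∘ₗ a₂) := by
      intro w hw
      obtain ⟨w1, hw1, w2, hw2, rfl⟩ := Submodule.mem_sup.mp (hrange hw)
      obtain ⟨n1, rfl⟩ := hw1
      obtain ⟨n2, rfl⟩ := hw2
      obtain ⟨e1, he1a, he1b⟩ := hall n1
      obtain ⟨e2, he2a, he2b⟩ := hall n2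
      rw [he1b, he2a]
      refine Submodule.mem_inf.mpr ⟨?_, ?_⟩
      · rw [LinearMap.mem_ker, map_add, map_smul, map_smul, hc₂b, hc₁b, smul_zero,
          smul_zero, add_zero]
      · rw [LinearMap.mem_ker, map_add, map_smul, map_smul, hc₂a, hc₁a, smul_zero,
          smul_zero, add_zero]
    -- hence the goal space lies in ker x
    have hfin : LinearMap.range (a₁ ∘ₗ x) ⊔ LinearMap.range (a₂ ∘ₗ x)
        ≤ LinearMap.ker x := by
      apply sup_le
      · rintro _ ⟨u, rfl⟩
        rw [LinearMap.mem_ker]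
        have hxu : x u ∈ LinearMap.range x := ⟨u, rfl⟩
        have hm := (Submodule.mem_inf.mp (hkill hxu)).1
        rw [LinearMap.mem_ker] at hm
        simpa using hm
      · rintro _ ⟨u, rfl⟩
        rw [LinearMap.mem_ker]
        have hxu : x u ∈ LinearMap.range x := ⟨u, rfl⟩
        have hm := (Submodule.mem_inf.mp (hkill hxu)).2
        rw [LinearMap.mem_ker] at hm
        simpa using hm
    have hqk : Module.finrank ℂ ↥(LinearMap.range (a₁ ∘ₗ x) ⊔ LinearMap.range (a₂ ∘ₗ x))
        ≤ Module.finrank ℂ ↥(LinearMap.ker x) := Submodule.finrank_mono hfin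
    omega
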